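/- The images of the monomials X1^{b1} X2^{b2} with 0 ≤ b1 < a1 and 0 ≤ b2 < a2 form a basis of the Milnor ring Q_W = ℂ[X1, X2]/Jac(W) as a vector space over ℂ. -/

import Mathlib

noncomputable section

open MvPolynomial

/-- The two-dimensional loop potential `W = X1^a1 * X2 + X2^a2 * X1`. -/
def loopPotential (a1 a2 : ℕ) : MvPolynomial (Fin 2) ℂ :=
  X 0 ^ a1 * X 1 + X 1 ^ a2 * X 0

/-- The Jacobian ideal of the loop potential. -/
def loopJac (a1 a2 : ℕ) : Ideal (MvPolynomial (Fin 2) ℂ) :=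
  Ideal.span {pderiv 0 (loopPotential a1 a2), pderiv 1 (loopPotential a1 a2)}

/-- The Milnor ring of the loop potential. -/
def loopMilnor (a1 a2 : ℕ) : Type :=
  MvPolynomial (Fin 2) ℂ ⧸ loopJac a1 a2

instance (a1 a2 : ℕ) : CommRing (loopMilnor a1 a2) :=
  Ideal.Quotient.commRing _

instance (a1 a2 : ℕ) : Algebra ℂ (loopMilnor a1 a2) :=
  Ideal.Quotient.algebra ℂ

namespace LoopAux

/-- exponent finsupp -/
def E (i j : ℕ) : Fin 2 →₀ ℕ := Finsupp.single 0 i + Finsupp.single 1 j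

lemma E_apply0 (i j : ℕ) : E i j 0 = i := by simp [E]
lemma E_apply1 (i j : ℕ) : E i j 1 = j := by simp [E]

lemma E_le_iff {i j k l : ℕ} : E i j ≤ E k l ↔ i ≤ k ∧ j ≤ l := by
  constructor
  · intro h
    exact ⟨by simpa [E_apply0] using h 0, by simpa [E_apply1] using h 1⟩
  · rintro ⟨h1, h2⟩ x
    fin_cases x <;> simpa [E_apply0, E_apply1]

lemma E_inj {i j k l : ℕ} : E i j = E k l ↔ i = k ∧ j = l := by
  constructor
  · intro h
    constructor
    · have := congrArg (fun f => f 0) h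
      simpa [E_apply0] using this
    · have := congrArg (fun f => f 1) h
      simpa [E_apply1] using this
  · rintro ⟨rfl, rfl⟩; rfl

lemma E_sub (i j k l : ℕ) : E k l - E i j = E (k - i) (l - j) := by
  ext x
  fin_cases x <;> simp [E_apply0, E_apply1, Finsupp.tsub_apply, E]

lemma E_add (i j k l : ℕ) : E i j + E k l = E (i + k) (j + l) := by
  ext x
  fin_cases x <;> simp [E, add_comm, add_left_comm]

/-- the monomial x^i y^j -/
def P (i j : ℕ) : MvPolynomial (Fin 2) ℂ := monomial (E i j) 1

lemma X_pow_mul (i j : ℕ) : (X 0 : MvPolynomial (Fin 2) ℂ) ^ i * X 1 ^ j = P i j := by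
  simp [P, E, X_pow_eq_monomial, monomial_mul]

lemma P_mul_P (i j k l : ℕ) : P i j * P k l = P (i + k) (j + l) := by
  simp [P, monomial_mul, E_add]


lemma g1_eq (a1 a2 : ℕ) :
    pderiv 0 (loopPotential a1 a2) = (a1 : ℂ) • P (a1 - 1) 1 + P 0 a2 := by
  have h0 : (pderiv (R := ℂ) (0 : Fin 2)) (X 1) = 0 := pderiv_X_of_ne (by decide)
  have h1 : (pderiv (R := ℂ) (0 : Fin 2)) (X 0) = 1 := pderiv_X_self 0
  have e1 : P (a1 - 1) 1 = (X 0 : MvPolynomial (Fin 2) ℂ) ^ (a1 - 1) * X 1 := by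
    rw [← X_pow_mul, pow_one]
  have e2 : P 0 a2 = (X 1 : MvPolynomial (Fin 2) ℂ) ^ a2 := by
    rw [← X_pow_mul]; simp
  rw [e1, e2, loopPotential]
  simp [pderiv_mul, pderiv_pow, h0, h1, mul_comm, mul_left_comm, mul_assoc, Algebra.smul_def]

lemma g2_eq (a1 a2 : ℕ) :
    pderiv 1 (loopPotential a1 a2) = P a1 0 + (a2 : ℂ) • P 1 (a2 - 1) := by
  have h0 : (pderiv (R := ℂ) (1 : Fin 2)) (X 0) = 0 := pderiv_X_of_ne (by decide)
  have h1 : (pderiv (R := ℂ) (1 : Fin 2)) (X 1) = 1 := pderiv_X_self 1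
  have e1 : P 1 (a2 - 1) = (X 0 : MvPolynomial (Fin 2) ℂ) * X 1 ^ (a2 - 1) := by
    rw [← X_pow_mul, pow_one]
  have e2 : P a1 0 = (X 0 : MvPolynomial (Fin 2) ℂ) ^ a1 := by
    rw [← X_pow_mul]; simp
  rw [e1, e2, loopPotential]
  simp [pderiv_mul, pderiv_pow, h0, h1, mul_comm, mul_left_comm, mul_assoc, Algebra.smul_def]


/-- The residue-pairing linear functional. -/
def lam (a1 a2 : ℕ) : MvPolynomial (Fin 2) ℂ →ₗ[ℂ] ℂ :=
  lcoeff ℂ (E (a1 - 1) (a2 - 1)) - (a1 : ℂ) • lcoeff ℂ (E 0 (2 * a2 - 2)) -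
    (a2 : ℂ) • lcoeff ℂ (E (2 * a1 - 2) 0)

lemma lam_def (a1 a2 : ℕ) (p : MvPolynomial (Fin 2) ℂ) :
    lam a1 a2 p = coeff (E (a1 - 1) (a2 - 1)) p - (a1 : ℂ) * coeff (E 0 (2 * a2 - 2)) p -
      (a2 : ℂ) * coeff (E (2 * a1 - 2) 0) p := by
  simp [lam, lcoeff_apply]

lemma coeff_mul_P (m : Fin 2 →₀ ℕ) (i j : ℕ) (p : MvPolynomial (Fin 2) ℂ) :
    coeff m (p * P i j) = if E i j ≤ m then coeff (m - E i j) p else 0 := by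
  simpa [P] using coeff_mul_monomial' m (E i j) 1 p

lemma lam_mul_g1 (a1 a2 : ℕ) (ha1 : 2 ≤ a1) (ha2 : 2 ≤ a2) (p : MvPolynomial (Fin 2) ℂ) :
    lam a1 a2 (p * pderiv 0 (loopPotential a1 a2)) = 0 := by
  rw [g1_eq, mul_add, mul_smul_comm, map_add, map_smul, lam_def, lam_def]
  rw [coeff_mul_P, coeff_mul_P, coeff_mul_P, coeff_mul_P, coeff_mul_P, coeff_mul_P]
  rw [E_sub, E_sub, E_sub, E_sub, E_sub, E_sub]
  simp only [E_le_iff]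
  rw [if_pos ⟨le_rfl, by omega⟩, if_neg (by omega), if_neg (by omega), if_neg (by omega),
    if_pos ⟨le_rfl, by omega⟩, if_neg (by omega)]
  have h1 : a1 - 1 - (a1 - 1) = 0 := by omega
  have h2 : a2 - 1 - 1 = a2 - 2 := by omega
  have h3 : 2 * a2 - 2 - a2 = a2 - 2 := by omega
  rw [h1, h2, h3]
  simp [smul_eq_mul]

lemma lam_mul_g2 (a1 a2 : ℕ) (ha1 : 2 ≤ a1) (ha2 : 2 ≤ a2) (p : MvPolynomial (Fin 2) ℂ) :
    lam a1 a2 (p * pderiv 1 (loopPotential a1 a2)) = 0 := by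
  rw [g2_eq, mul_add, mul_smul_comm, map_add, map_smul, lam_def, lam_def]
  rw [coeff_mul_P, coeff_mul_P, coeff_mul_P, coeff_mul_P, coeff_mul_P, coeff_mul_P]
  rw [E_sub, E_sub, E_sub, E_sub, E_sub, E_sub]
  simp only [E_le_iff]
  rw [if_neg (by omega), if_neg (by omega), if_pos ⟨by omega, le_rfl⟩,
    if_pos ⟨by omega, le_rfl⟩, if_neg (by omega), if_neg (by omega)]
  have h1 : 2 * a1 - 2 - a1 = a1 - 2 := by omega
  have h2 : a1 - 1 - 1 = a1 - 2 := by omega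
  have h3 : a2 - 1 - (a2 - 1) = 0 := by omega
  rw [h1, h2, h3]
  simp [smul_eq_mul]

lemma lam_eq_zero_of_mem (a1 a2 : ℕ) (ha1 : 2 ≤ a1) (ha2 : 2 ≤ a2)
    {p : MvPolynomial (Fin 2) ℂ} (hp : p ∈ loopJac a1 a2) : lam a1 a2 p = 0 := by
  rw [loopJac, Ideal.mem_span_pair] at hp
  obtain ⟨u, v, rfl⟩ := hp
  rw [map_add, lam_mul_g1 a1 a2 ha1 ha2, lam_mul_g2 a1 a2 ha1 ha2, add_zero]


/-- image of the monomial x^i y^j in the Milnor ring -/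
def q (a1 a2 i j : ℕ) : loopMilnor a1 a2 := Ideal.Quotient.mk (loopJac a1 a2) (P i j)

lemma mk_smul (a1 a2 : ℕ) (c : ℂ) (p : MvPolynomial (Fin 2) ℂ) :
    Ideal.Quotient.mk (loopJac a1 a2) (c • p) = c • Ideal.Quotient.mk (loopJac a1 a2) p := by
  rw [← Ideal.Quotient.mkₐ_eq_mk ℂ, map_smul]

lemma g1_mem (a1 a2 : ℕ) : pderiv 0 (loopPotential a1 a2) ∈ loopJac a1 a2 :=
  Ideal.subset_span (Set.mem_insert _ _)

lemma g2_mem (a1 a2 : ℕ) : pderiv 1 (loopPotential a1 a2) ∈ loopJac a1 a2 :=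
  Ideal.subset_span (Set.mem_insert_of_mem _ rfl)

lemma relA (a1 a2 i j : ℕ) :
    (a1 : ℂ) • q a1 a2 (i + (a1 - 1)) (j + 1) + q a1 a2 i (j + a2) = 0 := by
  have hP : P i j * pderiv 0 (loopPotential a1 a2) =
      (a1 : ℂ) • P (i + (a1 - 1)) (j + 1) + P i (j + a2) := by
    rw [g1_eq, mul_add, mul_smul_comm, P_mul_P, P_mul_P, add_zero]
  have hmem : P i j * pderiv 0 (loopPotential a1 a2) ∈ loopJac a1 a2 :=
    Ideal.mul_mem_left _ _ (g1_mem a1 a2)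
  have h0 : Ideal.Quotient.mk (loopJac a1 a2) (P i j * pderiv 0 (loopPotential a1 a2)) = 0 :=
    (Ideal.Quotient.eq_zero_iff_mem).mpr hmem
  rw [hP, map_add, mk_smul] at h0
  exact h0

lemma relB (a1 a2 i j : ℕ) :
    q a1 a2 (i + a1) j + (a2 : ℂ) • q a1 a2 (i + 1) (j + (a2 - 1)) = 0 := by
  have hP : P i j * pderiv 1 (loopPotential a1 a2) =
      P (i + a1) j + (a2 : ℂ) • P (i + 1) (j + (a2 - 1)) := by
    rw [g2_eq, mul_add, mul_smul_comm, P_mul_P, P_mul_P, add_zero]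
  have hmem : P i j * pderiv 1 (loopPotential a1 a2) ∈ loopJac a1 a2 :=
    Ideal.mul_mem_left _ _ (g2_mem a1 a2)
  have h0 : Ideal.Quotient.mk (loopJac a1 a2) (P i j * pderiv 1 (loopPotential a1 a2)) = 0 :=
    (Ideal.Quotient.eq_zero_iff_mem).mpr hmem
  rw [hP, map_add, mk_smul] at h0
  exact h0

lemma cast_ne (a1 a2 : ℕ) (ha1 : 2 ≤ a1) (ha2 : 2 ≤ a2) :
    ((a1 : ℂ) * (a2 : ℂ)) - 1 ≠ 0 := by
  have h4 : 4 ≤ a1 * a2 := Nat.mul_le_mul ha1 ha2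
  intro h
  rw [sub_eq_zero] at h
  have : ((a1 * a2 : ℕ) : ℂ) = ((1 : ℕ) : ℂ) := by push_cast; simpa using h
  have := Nat.cast_inj (R := ℂ).mp this
  omega

lemma relC (a1 a2 : ℕ) (ha1 : 2 ≤ a1) (ha2 : 2 ≤ a2) (i j : ℕ) :
    q a1 a2 (i + 1) (j + a2) = 0 := by
  have h1 := relA a1 a2 (i + 1) j
  have h2 := relB a1 a2 i (j + 1)
  have e1 : i + 1 + (a1 - 1) = i + a1 := by omega
  have e2 : j + 1 + (a2 - 1) = j + a2 := by omega
  rw [e1] at h1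
  rw [e2] at h2
  set A := q a1 a2 (i + a1) (j + 1) with hA
  set B := q a1 a2 (i + 1) (j + a2) with hB
  have hA' : A = -((a2 : ℂ) • B) := by
    rw [← add_eq_zero_iff_eq_neg] at *; exact h2
  rw [hA', smul_neg, ← mul_smul] at h1
  have h3 : (((a1 : ℂ) * (a2 : ℂ)) - 1) • B = 0 := by
    simp only [Algebra.smul_def] at h1 ⊢
    rw [map_sub, map_one, sub_mul, one_mul, sub_eq_zero]
    exact (neg_add_eq_zero.mp h1)
  rcases smul_eq_zero.mp h3 with h | h
  · exact absurd h (cast_ne a1 a2 ha1 ha2)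
  · exact h

lemma relD (a1 a2 : ℕ) (ha1 : 2 ≤ a1) (ha2 : 2 ≤ a2) (j : ℕ) :
    q a1 a2 0 (j + (2 * a2 - 1)) = 0 := by
  have h1 := relA a1 a2 0 (j + (a2 - 1))
  have e1 : (0 : ℕ) + (a1 - 1) = (a1 - 2) + 1 := by omega
  have e2 : j + (a2 - 1) + 1 = j + a2 := by omega
  have e3 : j + (a2 - 1) + a2 = j + (2 * a2 - 1) := by omega
  rw [e1, e2, e3, relC a1 a2 ha1 ha2 (a1 - 2) j, smul_zero, zero_add] at h1
  exact h1


lemma q_zero₁ (a1 a2 : ℕ) (ha1 : 2 ≤ a1) (ha2 : 2 ≤ a2) {i j : ℕ} (hi : 1 ≤ i) (hj : a2 ≤ j) :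
    q a1 a2 i j = 0 := by
  have h := relC a1 a2 ha1 ha2 (i - 1) (j - a2)
  have e1 : i - 1 + 1 = i := by omega
  have e2 : j - a2 + a2 = j := by omega
  rwa [e1, e2] at h

lemma q_zero₂ (a1 a2 : ℕ) (ha1 : 2 ≤ a1) (ha2 : 2 ≤ a2) {i j : ℕ} (hi : a1 ≤ i) (hj : 1 ≤ j) :
    q a1 a2 i j = 0 := by
  have h := relA a1 a2 (i - (a1 - 1)) (j - 1)
  have e1 : i - (a1 - 1) + (a1 - 1) = i := by omega
  have e2 : j - 1 + 1 = j := by omega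
  rw [e1, e2] at h
  rw [q_zero₁ a1 a2 ha1 ha2 (i := i - (a1 - 1)) (j := j - 1 + a2) (by omega) (by omega),
    add_zero] at h
  rcases smul_eq_zero.mp h with h' | h'
  · exact absurd h' (Nat.cast_ne_zero.mpr (by omega))
  · exact h'

lemma q_zero₃ (a1 a2 : ℕ) (ha1 : 2 ≤ a1) (ha2 : 2 ≤ a2) {j : ℕ} (hj : 2 * a2 - 1 ≤ j) :
    q a1 a2 0 j = 0 := by
  have h := relD a1 a2 ha1 ha2 (j - (2 * a2 - 1))
  have e1 : j - (2 * a2 - 1) + (2 * a2 - 1) = j := by omega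
  rwa [e1] at h

/-- the claimed basis set -/
def bset (a1 a2 : ℕ) : Set (loopMilnor a1 a2) :=
  Set.range fun b : Fin a1 × Fin a2 =>
    Ideal.Quotient.mk (loopJac a1 a2) (X 0 ^ (b.1 : ℕ) * X 1 ^ (b.2 : ℕ))

lemma basis_mem (a1 a2 : ℕ) {i j : ℕ} (hi : i < a1) (hj : j < a2) :
    q a1 a2 i j ∈ Submodule.span ℂ (bset a1 a2) :=
  Submodule.subset_span ⟨(⟨i, hi⟩, ⟨j, hj⟩), by simp [X_pow_mul, q]; rfl⟩

lemma q_mem_span (a1 a2 : ℕ) (ha1 : 2 ≤ a1) (ha2 : 2 ≤ a2) (i j : ℕ) :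
    q a1 a2 i j ∈ Submodule.span ℂ (bset a1 a2) := by
  by_cases hi : i < a1
  · by_cases hj : j < a2
    · exact basis_mem a1 a2 hi hj
    · push_neg at hj
      rcases Nat.eq_zero_or_pos i with rfl | hi1
      · by_cases hj2 : j ≤ 2 * a2 - 2
        · have h := relA a1 a2 0 (j - a2)
          have e1 : (0 : ℕ) + (a1 - 1) = a1 - 1 := by omega
          have e2 : j - a2 + a2 = j := by omega
          rw [e1, e2] at h
          rw [eq_neg_of_add_eq_zero_right h]
          exact Submodule.neg_mem _
            (Submodule.smul_mem _ _ (basis_mem a1 a2 (by omega) (by omega)))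
        · rw [q_zero₃ a1 a2 ha1 ha2 (by omega)]
          exact Submodule.zero_mem _
      · rw [q_zero₁ a1 a2 ha1 ha2 hi1 hj]
        exact Submodule.zero_mem _
  · push_neg at hi
    rcases Nat.eq_zero_or_pos j with rfl | hj1
    · have h := relB a1 a2 (i - a1) 0
      have e1 : i - a1 + a1 = i := by omega
      have e2 : (0 : ℕ) + (a2 - 1) = a2 - 1 := by omega
      rw [e1, e2] at h
      rw [eq_neg_of_add_eq_zero_left h]
      refine Submodule.neg_mem _ (Submodule.smul_mem _ _ ?_)
      by_cases h2 : i - a1 + 1 < a1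
      · exact basis_mem a1 a2 h2 (by omega)
      · rw [q_zero₂ a1 a2 ha1 ha2 (by omega) (by omega)]
        exact Submodule.zero_mem _
    · rw [q_zero₂ a1 a2 ha1 ha2 hi hj1]
      exact Submodule.zero_mem _

lemma span_top (a1 a2 : ℕ) (ha1 : 2 ≤ a1) (ha2 : 2 ≤ a2) :
    Submodule.span ℂ (bset a1 a2) = ⊤ := by
  rw [eq_top_iff]
  rintro x -
  obtain ⟨p, rfl⟩ := Ideal.Quotient.mk_surjective x
  rw [p.as_sum, map_sum]
  refine Submodule.sum_mem _ fun v hv => ?_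
  have hvE : v = E (v 0) (v 1) := by
    ext x
    fin_cases x <;> simp [E_apply0, E_apply1]
  have hv2 : monomial v (coeff v p) = (coeff v p) • P (v 0) (v 1) := by
    rw [P, smul_monomial, smul_eq_mul, mul_one, ← hvE]
  rw [hv2, mk_smul]
  exact Submodule.smul_mem _ _ (q_mem_span a1 a2 ha1 ha2 _ _)


lemma lam_P (a1 a2 i j : ℕ) :
    lam a1 a2 (P i j) =
      (if i = a1 - 1 ∧ j = a2 - 1 then 1 else 0) -
        (a1 : ℂ) * (if i = 0 ∧ j = 2 * a2 - 2 then 1 else 0) -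
        (a2 : ℂ) * (if i = 2 * a1 - 2 ∧ j = 0 then 1 else 0) := by
  rw [lam_def]
  simp only [P, coeff_monomial, E_inj]

lemma key_eval (a1 a2 : ℕ) (ha1 : 2 ≤ a1) (ha2 : 2 ≤ a2) (d1 d2 b1 b2 : ℕ)
    (hd1 : d1 < a1) (hd2 : d2 < a2) (hb1 : b1 < a1) (hb2 : b2 < a2) :
    lam a1 a2 (P ((a1 - 1 - d1) + b1) ((a2 - 1 - d2) + b2)) =
      (if b1 = d1 ∧ b2 = d2 then 1 else 0)
        - (a1 : ℂ) * (if (d1 = a1 - 1 ∧ d2 = 0) ∧ (b1 = 0 ∧ b2 = a2 - 1) then 1 else 0)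
        - (a2 : ℂ) * (if (d1 = 0 ∧ d2 = a2 - 1) ∧ (b1 = a1 - 1 ∧ b2 = 0) then 1 else 0) := by
  have h1 : ((a1 - 1 - d1) + b1 = a1 - 1 ∧ (a2 - 1 - d2) + b2 = a2 - 1) ↔
      (b1 = d1 ∧ b2 = d2) := by omega
  have h2 : ((a1 - 1 - d1) + b1 = 0 ∧ (a2 - 1 - d2) + b2 = 2 * a2 - 2) ↔
      ((d1 = a1 - 1 ∧ d2 = 0) ∧ (b1 = 0 ∧ b2 = a2 - 1)) := by omega
  have h3 : ((a1 - 1 - d1) + b1 = 2 * a1 - 2 ∧ (a2 - 1 - d2) + b2 = 0) ↔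
      ((d1 = 0 ∧ d2 = a2 - 1) ∧ (b1 = a1 - 1 ∧ b2 = 0)) := by omega
  rw [lam_P, if_congr h1 rfl rfl, if_congr h2 rfl rfl, if_congr h3 rfl rfl]

/-- the special index (a1-1, 0) -/
def dA (a1 a2 : ℕ) (ha1 : 2 ≤ a1) (ha2 : 2 ≤ a2) : Fin a1 × Fin a2 :=
  (⟨a1 - 1, by omega⟩, ⟨0, by omega⟩)

/-- the special index (0, a2-1) -/
def dB (a1 a2 : ℕ) (ha1 : 2 ≤ a1) (ha2 : 2 ≤ a2) : Fin a1 × Fin a2 :=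
  (⟨0, by omega⟩, ⟨a2 - 1, by omega⟩)

lemma indep_aux (a1 a2 : ℕ) (ha1 : 2 ≤ a1) (ha2 : 2 ≤ a2) (c : Fin a1 × Fin a2 → ℂ)
    (hc : (∑ b : Fin a1 × Fin a2, c b • P (b.1 : ℕ) (b.2 : ℕ)) ∈ loopJac a1 a2)
    (d : Fin a1 × Fin a2) :
    c d - (a1 : ℂ) * (if d = dA a1 a2 ha1 ha2 then c (dB a1 a2 ha1 ha2) else 0)
        - (a2 : ℂ) * (if d = dB a1 a2 ha1 ha2 then c (dA a1 a2 ha1 ha2) else 0) = 0 := by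
  have hmem2 : P (a1 - 1 - (d.1 : ℕ)) (a2 - 1 - (d.2 : ℕ)) *
      (∑ b : Fin a1 × Fin a2, c b • P (b.1 : ℕ) (b.2 : ℕ)) ∈ loopJac a1 a2 :=
    Ideal.mul_mem_left _ _ hc
  have h0 := lam_eq_zero_of_mem a1 a2 ha1 ha2 hmem2
  rw [Finset.mul_sum] at h0
  have hterm : ∀ b : Fin a1 × Fin a2,
      P (a1 - 1 - (d.1 : ℕ)) (a2 - 1 - (d.2 : ℕ)) * (c b • P (b.1 : ℕ) (b.2 : ℕ)) =
        c b • P ((a1 - 1 - (d.1 : ℕ)) + (b.1 : ℕ)) ((a2 - 1 - (d.2 : ℕ)) + (b.2 : ℕ)) :=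
    fun b => by rw [mul_smul_comm, P_mul_P]
  simp only [hterm] at h0
  rw [map_sum] at h0
  simp only [map_smul, smul_eq_mul] at h0
  have i1 : ∀ b : Fin a1 × Fin a2, (((b.1 : ℕ) = (d.1 : ℕ) ∧ (b.2 : ℕ) = (d.2 : ℕ)) ↔ b = d) := by
    intro b
    rw [Prod.ext_iff, Fin.ext_iff, Fin.ext_iff]
  have i2 : (((d.1 : ℕ) = a1 - 1 ∧ (d.2 : ℕ) = 0) ↔ d = dA a1 a2 ha1 ha2) := by
    rw [Prod.ext_iff, Fin.ext_iff, Fin.ext_iff]; rfl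
  have i3 : (((d.1 : ℕ) = 0 ∧ (d.2 : ℕ) = a2 - 1) ↔ d = dB a1 a2 ha1 ha2) := by
    rw [Prod.ext_iff, Fin.ext_iff, Fin.ext_iff]; rfl
  have i4 : ∀ b : Fin a1 × Fin a2, (((b.1 : ℕ) = 0 ∧ (b.2 : ℕ) = a2 - 1) ↔ b = dB a1 a2 ha1 ha2) := by
    intro b
    rw [Prod.ext_iff, Fin.ext_iff, Fin.ext_iff]; rfl
  have i5 : ∀ b : Fin a1 × Fin a2, (((b.1 : ℕ) = a1 - 1 ∧ (b.2 : ℕ) = 0) ↔ b = dA a1 a2 ha1 ha2) := by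
    intro b
    rw [Prod.ext_iff, Fin.ext_iff, Fin.ext_iff]; rfl
  have hkey : ∀ b : Fin a1 × Fin a2,
      lam a1 a2 (P ((a1 - 1 - (d.1 : ℕ)) + (b.1 : ℕ)) ((a2 - 1 - (d.2 : ℕ)) + (b.2 : ℕ))) =
        (if b = d then 1 else 0)
          - (a1 : ℂ) * (if d = dA a1 a2 ha1 ha2 ∧ b = dB a1 a2 ha1 ha2 then 1 else 0)
          - (a2 : ℂ) * (if d = dB a1 a2 ha1 ha2 ∧ b = dA a1 a2 ha1 ha2 then 1 else 0) := by
    intro b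
    rw [key_eval a1 a2 ha1 ha2 _ _ _ _ d.1.isLt d.2.isLt b.1.isLt b.2.isLt]
    rw [if_congr (i1 b) rfl rfl,
      if_congr (and_congr i2 (i4 b)) rfl rfl,
      if_congr (and_congr i3 (i5 b)) rfl rfl]
  simp only [hkey] at h0
  simp only [mul_sub, Finset.sum_sub_distrib, mul_ite, mul_one, mul_zero, ite_and] at h0
  rw [Finset.sum_ite_eq' Finset.univ d c] at h0
  simp only [Finset.mem_univ, if_true] at h0
  have hABne : dA a1 a2 ha1 ha2 ≠ dB a1 a2 ha1 ha2 := by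
    intro h
    have h1 := congrArg (fun p : Fin a1 × Fin a2 => (p.1 : ℕ)) h
    simp [dA, dB] at h1
    omega
  by_cases hA : d = dA a1 a2 ha1 ha2
  · have hB : ¬ d = dB a1 a2 ha1 ha2 := by rw [hA]; exact hABne
    simp [hA, hB, hABne, Finset.sum_ite_eq'] at h0 ⊢
    linear_combination h0
  · by_cases hB : d = dB a1 a2 ha1 ha2
    · have hBA : ¬ d = dA a1 a2 ha1 ha2 := hA
      simp [hB, hBA, hABne.symm, Finset.sum_ite_eq'] at h0 ⊢
      linear_combination h0
    · simp [hA, hB] at h0 ⊢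
      linear_combination h0


lemma dA_ne_dB (a1 a2 : ℕ) (ha1 : 2 ≤ a1) (ha2 : 2 ≤ a2) :
    dA a1 a2 ha1 ha2 ≠ dB a1 a2 ha1 ha2 := by
  intro h
  have h1 := congrArg (fun p : Fin a1 × Fin a2 => (p.1 : ℕ)) h
  simp [dA, dB] at h1
  omega

lemma c_eq_zero (a1 a2 : ℕ) (ha1 : 2 ≤ a1) (ha2 : 2 ≤ a2) (c : Fin a1 × Fin a2 → ℂ)
    (hc : (∑ b : Fin a1 × Fin a2, c b • P (b.1 : ℕ) (b.2 : ℕ)) ∈ loopJac a1 a2)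
    (d : Fin a1 × Fin a2) : c d = 0 := by
  have hABne := dA_ne_dB a1 a2 ha1 ha2
  have hA := indep_aux a1 a2 ha1 ha2 c hc (dA a1 a2 ha1 ha2)
  have hB := indep_aux a1 a2 ha1 ha2 c hc (dB a1 a2 ha1 ha2)
  rw [if_pos rfl, if_neg hABne] at hA
  rw [if_neg hABne.symm, if_pos rfl] at hB
  have h1 : ((a1 : ℂ) * (a2 : ℂ) - 1) * c (dA a1 a2 ha1 ha2) = 0 := by
    linear_combination (-1 : ℂ) * hA - (a1 : ℂ) * hB
  have h2 : c (dA a1 a2 ha1 ha2) = 0 := by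
    rcases mul_eq_zero.mp h1 with h | h
    · exact absurd h (cast_ne a1 a2 ha1 ha2)
    · exact h
  have h3 : c (dB a1 a2 ha1 ha2) = 0 := by linear_combination hB + (a2 : ℂ) * h2
  have hd := indep_aux a1 a2 ha1 ha2 c hc d
  split_ifs at hd <;>
    first
      | linear_combination hd
      | linear_combination hd + (a1 : ℂ) * h3
      | linear_combination hd + (a2 : ℂ) * h2
      | linear_combination hd + (a1 : ℂ) * h3 + (a2 : ℂ) * h2

end LoopAux

open LoopAux in
theorem loopMilnor_monomial_basis (a1 a2 : ℕ) (ha1 : 2 ≤ a1) (ha2 : 2 ≤ a2) :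
    LinearIndependent ℂ
      (fun b : Fin a1 × Fin a2 =>
        Ideal.Quotient.mk (loopJac a1 a2) (X 0 ^ (b.1 : ℕ) * X 1 ^ (b.2 : ℕ))) ∧
    Submodule.span ℂ
      (Set.range (fun b : Fin a1 × Fin a2 =>
        Ideal.Quotient.mk (loopJac a1 a2) (X 0 ^ (b.1 : ℕ) * X 1 ^ (b.2 : ℕ)))) = ⊤ := by
  constructor
  · rw [Fintype.linearIndependent_iff]
    intro c hc0
    have hmk : Ideal.Quotient.mk (loopJac a1 a2)
        (∑ b : Fin a1 × Fin a2, c b • P (b.1 : ℕ) (b.2 : ℕ)) = 0 := by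
      rw [map_sum]
      rw [← hc0]
      refine Finset.sum_congr rfl fun b _ => ?_
      rw [mk_smul, X_pow_mul]
    exact c_eq_zero a1 a2 ha1 ha2 c (Ideal.Quotient.eq_zero_iff_mem.mp hmk)
  · exact span_top a1 a2 ha1 ha2


end
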